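/- Comparison of the rough-path norm and the norm of its logarithm: Let A = ⊕_{k=0}^N A_k be a finite-dimensional truncated graded unital associative ℝ-algebra with A_0 = ℝ·1, with fixed norms on the components A_k and projections π_k : A → A_k. Then there exist constants c, C > 0, depending only on A, N and the chosen norms (and not on the path, T or α), such that: for every T > 0, every α ∈ (0,1), and every map X : Δ_T → A with π_0 X_{s,t} = 1 for all (s,t), setting L_{s,t} = log X_{s,t} = Σ_{k=1}^N (−1)^{k+1}(X_{s,t} − 1)^k/k and defining ‖X‖ (respectively ‖L‖) as the infimum over all M ≥ 0 such that ‖π_k X_{s,t}‖ ≤ M^k |t−s|^{kα} (respectively ‖π_k L_{s,t}‖ ≤ M^k |t−s|^{kα}) for all 1 ≤ k ≤ N and all (s,t) ∈ Δ_T, one has c‖X‖ ≤ ‖L‖ ≤ C‖X‖ whenever ‖X‖ < ∞. -/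

import Mathlib

noncomputable section
namespace St9




variable {A : Type*} [Ring A] [Algebra ℝ A] (𝒜 : ℕ → Submodule ℝ A) [GradedAlgebra 𝒜]

/-- Projection onto the `k`-th graded component, as a linear map `A →ₗ[ℝ] A`. -/
def gproj (k : ℕ) : A →ₗ[ℝ] A :=
  (𝒜 k).subtype ∘ₗ (DirectSum.component ℝ ℕ (fun i => ↥(𝒜 i)) k) ∘ₗ
    (DirectSum.decomposeAlgEquiv 𝒜).toLinearMap

lemma gproj_apply (k : ℕ) (x : A) :
    gproj 𝒜 k x = ((DirectSum.decompose 𝒜 x k : 𝒜 k) : A) := rfl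

lemma gproj_of_mem {a : ℕ} {x : A} (hx : x ∈ 𝒜 a) (k : ℕ) :
    gproj 𝒜 k x = if k = a then x else 0 := by
  rw [gproj_apply]
  split_ifs with h
  · subst h; exact DirectSum.decompose_of_mem_same 𝒜 hx
  · exact DirectSum.decompose_of_mem_ne 𝒜 hx (Ne.symm h)

lemma one_mem_grade_zero : (1 : A) ∈ 𝒜 0 := SetLike.one_mem_graded 𝒜

lemma gproj_one_zero : gproj 𝒜 0 (1 : A) = 1 := by
  rw [gproj_of_mem 𝒜 (one_mem_grade_zero 𝒜)]; simp

lemma gproj_one (k : ℕ) (hk : 1 ≤ k) : gproj 𝒜 k (1 : A) = 0 := by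
  rw [gproj_of_mem 𝒜 (one_mem_grade_zero 𝒜)]
  have : k ≠ 0 := Nat.one_le_iff_ne_zero.mp hk
  simp [this]

lemma gproj_mul (k : ℕ) (x y : A) :
    gproj 𝒜 k (x * y) = ∑ ij ∈ Finset.HasAntidiagonal.antidiagonal k, gproj 𝒜 ij.1 x * gproj 𝒜 ij.2 y := by
  induction x using DirectSum.Decomposition.inductionOn 𝒜 with
  | zero => simp
  | homogeneous xh =>
    rename_i a
    induction y using DirectSum.Decomposition.inductionOn 𝒜 with
    | zero => simp
    | homogeneous yh =>
      rename_i b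
      have hab : (xh : A) * (yh : A) ∈ 𝒜 (a + b) := SetLike.mul_mem_graded xh.2 yh.2
      rw [gproj_of_mem 𝒜 hab]
      have hterm : ∀ ij : ℕ × ℕ, ij ∈ Finset.HasAntidiagonal.antidiagonal k →
          gproj 𝒜 ij.1 (xh : A) * gproj 𝒜 ij.2 (yh : A)
            = if ij = (a, b) then (xh : A) * (yh : A) else 0 := by
        intro ij _
        rw [gproj_of_mem 𝒜 xh.2, gproj_of_mem 𝒜 yh.2]
        by_cases h1 : ij.1 = a <;> by_cases h2 : ij.2 = b <;>
          simp [h1, h2, Prod.ext_iff]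
      rw [Finset.sum_congr rfl hterm, Finset.sum_ite_eq' (Finset.HasAntidiagonal.antidiagonal k)]
      simp only [Finset.HasAntidiagonal.mem_antidiagonal]
      by_cases h : a + b = k <;> simp [h, Ne.symm]
    | add y y' hy hy' => simp [mul_add, hy, hy', Finset.sum_add_distrib]
  | add x x' hx hx' => simp [add_mul, hx, hx', Finset.sum_add_distrib]



/-- Recursive bound for the `k`-component of the `(m+1)`-st power of an element whose
`j`-components have norms `f j`. -/
def GB (K : ℝ) (f : ℕ → ℝ) : ℕ → ℕ → ℝ
  | 0 => f
  | m + 1 => fun k => K * ∑ ij ∈ Finset.HasAntidiagonal.antidiagonal k, GB K f m ij.1 * f ij.2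

lemma GB_nonneg {K : ℝ} {f : ℕ → ℝ} (hK : 0 ≤ K) (hf : ∀ j, 0 ≤ f j) :
    ∀ m k, 0 ≤ GB K f m k := by
  intro m
  induction m with
  | zero => exact hf
  | succ m ih =>
    intro k
    exact mul_nonneg hK (Finset.sum_nonneg fun ij _ => mul_nonneg (ih ij.1) (hf ij.2))

lemma GB_zero {K : ℝ} {f : ℕ → ℝ} (hf0 : f 0 = 0) : ∀ m, GB K f m 0 = 0 := by
  intro m
  induction m with
  | zero => exact hf0
  | succ m ih => simp [GB, hf0]

/-- weight `W k = M^k τ^{kα}`. -/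
noncomputable def Wt (M τ α : ℝ) (k : ℕ) : ℝ := M ^ k * τ ^ ((k : ℝ) * α)

lemma Wt_nonneg {M τ α : ℝ} (hM : 0 ≤ M) (hτ : 0 ≤ τ) (k : ℕ) : 0 ≤ Wt M τ α k :=
  mul_nonneg (pow_nonneg hM k) (Real.rpow_nonneg hτ _)

lemma Wt_mul {M τ α : ℝ} (hM : 0 ≤ M) (hτ : 0 ≤ τ) (hα : 0 < α) {i j k : ℕ}
    (hij : i + j = k) : Wt M τ α i * Wt M τ α j = Wt M τ α k := by
  subst hij
  unfold Wt
  rcases Nat.eq_zero_or_pos (i + j) with h | h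
  · obtain ⟨hi, hj⟩ := Nat.add_eq_zero.mp h
    subst hi; subst hj; simp
  · have hne : (i : ℝ) * α + (j : ℝ) * α ≠ 0 := by
      have : (0:ℝ) < ((i : ℝ) + (j : ℝ)) * α := by
        apply mul_pos _ hα
        have : (0:ℕ) < i + j := h
        exact_mod_cast this
      nlinarith [this]
    have := Real.rpow_add' hτ hne
    rw [pow_add]
    rw [show ((↑(i+j) : ℝ) * α) = (i:ℝ)*α + (j:ℝ)*α by push_cast; ring, this]
    ring

lemma two_pow_add_le {i j : ℕ} (hi : 1 ≤ i) (hj : 1 ≤ j) : 2 ^ i + 2 ^ j ≤ 2 ^ (i + j) := by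
  rw [pow_add]
  exact Nat.add_le_mul (Nat.one_lt_two_pow_iff.mpr (by omega)) (Nat.one_lt_two_pow_iff.mpr (by omega))

/-- Main numeric estimate on the recursion `GB`. -/
lemma GB_le {K Q M τ α : ℝ} {f : ℕ → ℝ} {k₀ : ℕ}
    (hK : 0 ≤ K) (hQ : 1 ≤ Q) (hM : 0 ≤ M) (hτ : 0 ≤ τ) (hα : 0 < α)
    (hf0 : f 0 = 0) (hf : ∀ j, 0 ≤ f j)
    (hfb : ∀ j, 1 ≤ j → j < k₀ → Q * f j ≤ Q ^ (2 ^ j) * Wt M τ α j) :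
    ∀ m, ∀ k ≤ k₀, (m = 0 → k < k₀) →
      Q ^ (m + 1) * GB K f m k ≤ K ^ m * ((k : ℝ) + 1) ^ m * Q ^ (2 ^ k) * Wt M τ α k := by
  have hQ0 : (0:ℝ) ≤ Q := le_trans zero_le_one hQ
  intro m
  induction m with
  | zero =>
    intro k hk hk'
    rcases Nat.eq_zero_or_pos k with h | h
    · subst h
      have hW : Wt M τ α 0 = 1 := by simp [Wt]
      simp only [GB, hf0, mul_zero, hW, mul_one]
      positivity
    · simpa [GB] using hfb k h (hk' rfl)
  | succ m ih =>
    intro k hk _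
    have hB : (0:ℝ) ≤ K ^ m * ((k : ℝ) + 1) ^ m * Q ^ (2 ^ k) * Wt M τ α k := by
      have := Wt_nonneg hM hτ (α := α) k
      positivity
    have hterm : ∀ ij ∈ Finset.HasAntidiagonal.antidiagonal k,
        (Q ^ (m + 1) * GB K f m ij.1) * (Q * f ij.2)
          ≤ K ^ m * ((k : ℝ) + 1) ^ m * Q ^ (2 ^ k) * Wt M τ α k := by
      intro ij hij
      obtain ⟨i, j⟩ := ij
      simp only [Finset.HasAntidiagonal.mem_antidiagonal] at hij
      rcases Nat.eq_zero_or_pos j with hj | hj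
      · subst hj; simp [hf0]; exact hB
      rcases Nat.eq_zero_or_pos i with hi | hi
      · subst hi; simp [GB_zero hf0]; exact hB
      -- now 1 ≤ i, 1 ≤ j
      have hik : i ≤ k₀ := by omega
      have h1 : Q ^ (m + 1) * GB K f m i ≤ K ^ m * ((i : ℝ) + 1) ^ m * Q ^ (2 ^ i) * Wt M τ α i :=
        ih i hik (fun _ => by omega)
      have h2 : Q * f j ≤ Q ^ (2 ^ j) * Wt M τ α j := hfb j hj (by omega)
      have hmul := mul_le_mul h1 h2 (mul_nonneg hQ0 (hf j))
        (by have := Wt_nonneg hM hτ (α := α) i; positivity)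
      refine le_trans hmul ?_
      have hW : Wt M τ α i * Wt M τ α j = Wt M τ α k := Wt_mul hM hτ hα hij
      have hQpow : Q ^ (2 ^ i) * Q ^ (2 ^ j) ≤ Q ^ (2 ^ k) := by
        rw [← pow_add]
        exact pow_le_pow_right₀ hQ (by subst hij; exact two_pow_add_le hi hj)
      have hbase : ((i : ℝ) + 1) ^ m ≤ ((k : ℝ) + 1) ^ m := by
        apply pow_le_pow_left₀ (by positivity)
        have : i ≤ k := by omega
        exact_mod_cast Nat.succ_le_succ this
      calc K ^ m * ((i : ℝ) + 1) ^ m * Q ^ (2 ^ i) * Wt M τ α i * (Q ^ (2 ^ j) * Wt M τ α j)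
          = (K ^ m * ((i : ℝ) + 1) ^ m) * (Q ^ (2 ^ i) * Q ^ (2 ^ j)) * (Wt M τ α i * Wt M τ α j) := by ring
        _ ≤ (K ^ m * ((k : ℝ) + 1) ^ m) * (Q ^ (2 ^ k)) * (Wt M τ α k) := by
            rw [hW]
            apply mul_le_mul_of_nonneg_right _ (Wt_nonneg hM hτ k)
            apply mul_le_mul _ hQpow (by positivity) (by positivity)
            exact mul_le_mul_of_nonneg_left hbase (by positivity)
        _ = K ^ m * ((k : ℝ) + 1) ^ m * Q ^ (2 ^ k) * Wt M τ α k := by ring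
    -- sum the termwise bounds
    have hsum : ∑ ij ∈ Finset.HasAntidiagonal.antidiagonal k, (Q ^ (m + 1) * GB K f m ij.1) * (Q * f ij.2)
        ≤ (k + 1 : ℕ) • (K ^ m * ((k : ℝ) + 1) ^ m * Q ^ (2 ^ k) * Wt M τ α k) := by
      have := Finset.sum_le_card_nsmul (Finset.HasAntidiagonal.antidiagonal k) _ _ hterm
      simpa [Finset.Nat.card_antidiagonal] using this
    have hGB : Q ^ (m + 1 + 1) * GB K f (m + 1) k
        = K * ∑ ij ∈ Finset.HasAntidiagonal.antidiagonal k, (Q ^ (m + 1) * GB K f m ij.1) * (Q * f ij.2) := by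
      simp only [GB, Finset.mul_sum]
      exact Finset.sum_congr rfl fun ij _ => by ring
    rw [hGB]
    calc K * ∑ ij ∈ Finset.HasAntidiagonal.antidiagonal k, (Q ^ (m + 1) * GB K f m ij.1) * (Q * f ij.2)
        ≤ K * ((k + 1 : ℕ) • (K ^ m * ((k : ℝ) + 1) ^ m * Q ^ (2 ^ k) * Wt M τ α k)) := by
          apply mul_le_mul_of_nonneg_left _ hK
          exact hsum
      _ = K ^ (m+1) * ((k : ℝ) + 1) ^ (m+1) * Q ^ (2 ^ k) * Wt M τ α k := by
          simp [nsmul_eq_mul]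
          push_cast
          ring


section NuEstimates

variable {A : Type*} [Ring A] [Algebra ℝ A] (𝒜 : ℕ → Submodule ℝ A) [GradedAlgebra 𝒜]
variable {ν : A → ℝ} (hν_add : ∀ x y : A, ν (x + y) ≤ ν x + ν y)
  (hν0 : ν 0 = 0) (hν_nonneg : ∀ x, 0 ≤ ν x)

include hν_add hν0 in
lemma nu_sum_le {ι : Type*} (s : Finset ι) (g : ι → A) :
    ν (∑ i ∈ s, g i) ≤ ∑ i ∈ s, ν (g i) := by
  classical
  induction s using Finset.cons_induction with
  | empty => simp [hν0]
  | cons a s ha ih =>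
    rw [Finset.sum_cons, Finset.sum_cons]
    exact le_trans (hν_add _ _) (by gcongr)

include hν_add hν0 hν_nonneg in
/-- Norm of the `k`-component of a power, bounded by the recursion `GB`. -/
lemma nu_gproj_pow_le {K : ℝ} (hK : 0 ≤ K)
    (hKmul : ∀ x y : A, ν (x * y) ≤ K * (ν x * ν y)) (y : A) :
    ∀ m k, ν (gproj 𝒜 k (y ^ (m + 1))) ≤ GB K (fun j => ν (gproj 𝒜 j y)) m k := by
  intro m
  induction m with
  | zero => intro k; simp [GB]
  | succ m ih =>
    intro k
    have hpow : y ^ (m + 1 + 1) = y ^ (m + 1) * y := pow_succ y (m + 1)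
    rw [hpow, gproj_mul]
    refine le_trans (nu_sum_le hν_add hν0 _ _) ?_
    show ∑ ij ∈ Finset.HasAntidiagonal.antidiagonal k, ν (gproj 𝒜 ij.1 (y ^ (m+1)) * gproj 𝒜 ij.2 y)
      ≤ GB K (fun j => ν (gproj 𝒜 j y)) (m + 1) k
    simp only [GB, Finset.mul_sum]
    apply Finset.sum_le_sum
    intro ij _
    refine le_trans (hKmul _ _) ?_
    apply mul_le_mul_of_nonneg_left _ hK
    exact mul_le_mul_of_nonneg_right (ih ij.1) (hν_nonneg _)
end NuEstimates

end St9

noncomputable section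
namespace St9

lemma exists_mul_bound {A : Type*} [Ring A] [Algebra ℝ A] [FiniteDimensional ℝ A]
    (ν : A → ℝ)
    (hν_add : ∀ x y : A, ν (x + y) ≤ ν x + ν y)
    (hν_smul : ∀ (r : ℝ) (x : A), ν (r • x) = |r| * ν x)
    (hν_eq_zero : ∀ x : A, ν x = 0 ↔ x = 0) :
    ∃ K : ℝ, 1 ≤ K ∧ ∀ x y : A, ν (x * y) ≤ K * (ν x * ν y) := by
  have hν0 : ν 0 = 0 := (hν_eq_zero 0).mpr rfl
  have hνneg : ∀ x : A, ν (-x) = ν x := by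
    intro x
    have := hν_smul (-1) x
    simpa using this
  letI : NormedAddCommGroup A := AddGroupNorm.toNormedAddCommGroup
    { toFun := ν
      map_zero' := hν0
      add_le' := hν_add
      neg' := hνneg
      eq_zero_of_map_eq_zero' := fun x hx => (hν_eq_zero x).mp hx }
  have hnorm : ∀ x : A, ‖x‖ = ν x := fun _ => rfl
  letI : NormedSpace ℝ A :=
    { norm_smul_le := fun r x => by
        rw [hnorm, hnorm, (hν_smul r x)]
        exact le_of_eq (by rw [Real.norm_eq_abs]) }
  let B : A →ₗ[ℝ] A →L[ℝ] A :=
    (LinearMap.toContinuousLinearMap.toLinearMap).comp (LinearMap.mul ℝ A)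
  let B' : A →L[ℝ] A →L[ℝ] A := LinearMap.toContinuousLinearMap B
  refine ⟨max 1 ‖B'‖, le_max_left _ _, fun x y => ?_⟩
  have h := B'.le_opNorm₂ x y
  have hBxy : B' x y = x * y := rfl
  rw [hBxy, hnorm, hnorm, hnorm] at h
  calc ν (x * y) ≤ ‖B'‖ * ν x * ν y := h
    _ ≤ max 1 ‖B'‖ * (ν x * ν y) := by
        rw [mul_assoc]
        apply mul_le_mul_of_nonneg_right (le_max_right _ _)
        have h1 : 0 ≤ ν x := by
          have h2 := hν_add x (-x)
          rw [hνneg] at h2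
          simp [hν0] at h2
          linarith
        have h2 : 0 ≤ ν y := by
          have h3 := hν_add y (-y)
          rw [hνneg] at h3
          simp [hν0] at h3
          linarith
        positivity

end St9

end



/-! Statement 9: comparison of the homogeneous rough-path norm of `X` and of its
logarithm `L = log X` in a truncated graded algebra (Lemma 3.18 of the paper). -/

noncomputable section

/-- The set of admissible homogeneous-norm constants for a two-parameter map
`Y : Δ_T → A` in a graded algebra, relative to a norm `ν` on `A`:  all `M ≥ 0` such that
`ν (π_k Y_{s,t}) ≤ M^k |t-s|^{kα}` for all `1 ≤ k ≤ N` and all `0 ≤ s ≤ t ≤ T`.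
The homogeneous norm `‖Y‖` is the infimum of this set. -/
def homNormSet {A : Type*} [Ring A] [Algebra ℝ A]
    (𝒜 : ℕ → Submodule ℝ A) [GradedAlgebra 𝒜] (ν : A → ℝ) (N : ℕ) (T α : ℝ)
    (Y : ℝ → ℝ → A) : Set ℝ :=
  {M : ℝ | 0 ≤ M ∧ ∀ k : ℕ, 1 ≤ k → k ≤ N → ∀ s t : ℝ, 0 ≤ s → s ≤ t → t ≤ T →
    ν ((DirectSum.decompose 𝒜 (Y s t) k : 𝒜 k) : A) ≤ M ^ k * (t - s) ^ ((k : ℝ) * α)}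

/-- The (truncated) logarithm `L_{s,t} = Σ_{k=1}^N (-1)^{k+1} (X_{s,t} - 1)^k / k`. -/
def truncLog {A : Type*} [Ring A] [Algebra ℝ A] (N : ℕ) (X : ℝ → ℝ → A) : ℝ → ℝ → A :=
  fun s t => ∑ k ∈ Finset.Icc 1 N, ((-1 : ℝ) ^ (k + 1) * (k : ℝ)⁻¹) • (X s t - 1) ^ k

/-- Let `A = ⊕_{k=0}^N A_k` be a finite-dimensional graded unital
associative ℝ-algebra truncated at level `N`, with `A_0 = ℝ·1`, equipped with a norm
`ν`.  There are constants `c, C > 0`, depending only on `A`, `N` and `ν` (not on the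
path, `T` or `α`), such that for every `T > 0`, `α ∈ (0,1)` and `X : Δ_T → A` with
`π_0 X_{s,t} = 1`, one has `c ‖X‖ ≤ ‖L‖ ≤ C ‖X‖` whenever `‖X‖ < ∞`, where
`L = log X` and `‖·‖` is the homogeneous norm (infimum of `homNormSet`). -/
theorem norm_log_comparable_norm_roughPath
    {A : Type*} [Ring A] [Algebra ℝ A] [FiniteDimensional ℝ A]
    (N : ℕ) (𝒜 : ℕ → Submodule ℝ A) [GradedAlgebra 𝒜]
    (h0 : 𝒜 0 = Submodule.span ℝ {(1 : A)})
    (htrunc : ∀ k : ℕ, N < k → 𝒜 k = ⊥)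
    (ν : A → ℝ)
    (hν_add : ∀ x y : A, ν (x + y) ≤ ν x + ν y)
    (hν_smul : ∀ (r : ℝ) (x : A), ν (r • x) = |r| * ν x)
    (hν_eq_zero : ∀ x : A, ν x = 0 ↔ x = 0) :
    ∃ c C : ℝ, 0 < c ∧ 0 < C ∧
      ∀ T : ℝ, 0 < T → ∀ α : ℝ, α ∈ Set.Ioo (0 : ℝ) 1 → ∀ X : ℝ → ℝ → A,
        (∀ s t : ℝ, 0 ≤ s → s ≤ t → t ≤ T →
          ((DirectSum.decompose 𝒜 (X s t) 0 : 𝒜 0) : A) = 1) →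
        (homNormSet 𝒜 ν N T α X).Nonempty →
        c * sInf (homNormSet 𝒜 ν N T α X) ≤ sInf (homNormSet 𝒜 ν N T α (truncLog N X)) ∧
        sInf (homNormSet 𝒜 ν N T α (truncLog N X)) ≤ C * sInf (homNormSet 𝒜 ν N T α X) := by
  classical
  obtain ⟨K, hK1, hKmul⟩ := St9.exists_mul_bound ν hν_add hν_smul hν_eq_zero
  have hK0 : (0:ℝ) ≤ K := le_trans zero_le_one hK1
  have hν0 : ν 0 = 0 := (hν_eq_zero 0).mpr rfl
  have hνneg : ∀ x : A, ν (-x) = ν x := fun x => by simpa using hν_smul (-1) x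
  have hν_nonneg : ∀ x : A, 0 ≤ ν x := by
    intro x
    have h2 := hν_add x (-x)
    rw [hνneg] at h2
    simp [hν0] at h2
    linarith
  -- the constants
  set E1 : ℝ := ∑ m ∈ Finset.Icc 1 N, ((m:ℝ))⁻¹ * (K ^ (m-1) * (((N:ℝ)+1)) ^ (m-1)) with hE1def
  set E2 : ℝ := ∑ m ∈ Finset.Icc 2 N, ((m:ℝ))⁻¹ * (K ^ (m-1) * (((N:ℝ)+1)) ^ (m-1)) with hE2def
  have hE1nn : 0 ≤ E1 := Finset.sum_nonneg fun m _ => by positivity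
  have hE2nn : 0 ≤ E2 := Finset.sum_nonneg fun m _ => by positivity
  set C : ℝ := max 1 E1 with hCdef
  have hC1 : (1:ℝ) ≤ C := le_max_left _ _
  have hC0 : (0:ℝ) < C := lt_of_lt_of_le one_pos hC1
  set Q : ℝ := 1 + E2 with hQdef
  have hQ1 : (1:ℝ) ≤ Q := by simp [hQdef]; linarith
  have hQ0 : (0:ℝ) < Q := lt_of_lt_of_le one_pos hQ1
  set D : ℝ := Q ^ (2 ^ N) with hDdef
  have hD1 : (1:ℝ) ≤ D := one_le_pow₀ hQ1
  have hD0 : (0:ℝ) < D := lt_of_lt_of_le one_pos hD1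
  refine ⟨D⁻¹, C, by positivity, hC0, ?_⟩
  intro T hT α hα X hX0 hne
  obtain ⟨hα0, hα1⟩ := hα
  set SX := homNormSet 𝒜 ν N T α X with hSX
  set SL := homNormSet 𝒜 ν N T α (truncLog N X) with hSL
  -- upper claim
  have hupper : ∀ M ∈ SX, C * M ∈ SL := by
    rintro M ⟨hM0, hM⟩
    refine ⟨by positivity, ?_⟩
    intro k hk1 hkN s t hs hst htT
    set τ : ℝ := t - s with hτdef
    have hτ0 : 0 ≤ τ := by simp [hτdef]; linarith
    set y : A := X s t - 1 with hydef
    set f : ℕ → ℝ := fun j => ν (St9.gproj 𝒜 j y) with hfdef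
    have hf0 : f 0 = 0 := by
      have : St9.gproj 𝒜 0 y = 0 := by
        rw [hydef, map_sub, St9.gproj_one_zero, St9.gproj_apply, hX0 s t hs hst htT, sub_self]
      simp [hfdef, this, hν0]
    have hfj : ∀ j, 1 ≤ j → f j = ν (St9.gproj 𝒜 j (X s t)) := by
      intro j hj
      rw [hfdef]
      simp only [hydef, map_sub, St9.gproj_one 𝒜 j hj, sub_zero]
    have hfnn : ∀ j, 0 ≤ f j := fun j => hν_nonneg _
    have hfb : ∀ j, 1 ≤ j → j < N + 1 → (1:ℝ) * f j ≤ (1:ℝ) ^ (2 ^ j) * St9.Wt M τ α j := by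
      intro j hj hjN
      rw [one_mul, one_pow, one_mul, hfj j hj, St9.Wt, St9.gproj_apply]
      exact hM j hj (by omega) s t hs hst htT
    have hGB := St9.GB_le (f := f) (k₀ := N + 1) hK0 le_rfl hM0 hτ0 hα0 hf0 hfnn hfb
    -- projection of the truncated log
    have hLproj : St9.gproj 𝒜 k (truncLog N X s t)
        = ∑ m ∈ Finset.Icc 1 N, ((-1:ℝ) ^ (m + 1) * (m:ℝ)⁻¹) • St9.gproj 𝒜 k (y ^ m) := by
      rw [truncLog, map_sum]
      exact Finset.sum_congr rfl fun m _ => by rw [map_smul, hydef]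
    rw [← St9.gproj_apply, hLproj]
    refine le_trans (St9.nu_sum_le hν_add hν0 _ _) ?_
    have hterm : ∀ m ∈ Finset.Icc 1 N,
        ν (((-1:ℝ) ^ (m + 1) * (m:ℝ)⁻¹) • St9.gproj 𝒜 k (y ^ m))
          ≤ ((m:ℝ))⁻¹ * (K ^ (m-1) * (((N:ℝ)+1)) ^ (m-1)) * St9.Wt M τ α k := by
      intro m hm
      rw [Finset.mem_Icc] at hm
      obtain ⟨hm1, hmN⟩ := hm
      rw [hν_smul]
      have habs : |(-1:ℝ) ^ (m + 1) * (m:ℝ)⁻¹| = (m:ℝ)⁻¹ := by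
        rw [abs_mul, abs_pow, abs_neg, abs_one, one_pow, one_mul, abs_of_nonneg (by positivity)]
      rw [habs]
      obtain ⟨m', rfl⟩ : ∃ m', m = m' + 1 := ⟨m - 1, by omega⟩
      have h1 : ν (St9.gproj 𝒜 k (y ^ (m' + 1))) ≤ St9.GB K f m' k :=
        St9.nu_gproj_pow_le 𝒜 hν_add hν0 hν_nonneg hK0 hKmul y m' k
      have h2 := hGB m' k (by omega) (fun _ => by omega)
      rw [one_pow, one_pow, one_mul, mul_one] at h2
      have h3 : ν (St9.gproj 𝒜 k (y ^ (m' + 1)))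
          ≤ K ^ m' * (((N:ℝ))+1) ^ m' * St9.Wt M τ α k := by
        refine le_trans h1 (le_trans h2 ?_)
        have hWnn := St9.Wt_nonneg (α := α) hM0 hτ0 k
        have hkN' : (k:ℝ) ≤ (N:ℝ) := by exact_mod_cast hkN
        gcongr <;> first | positivity | linarith
      calc ((m' + 1 : ℕ):ℝ)⁻¹ * ν (St9.gproj 𝒜 k (y ^ (m' + 1)))
          ≤ ((m' + 1 : ℕ):ℝ)⁻¹ * (K ^ m' * (((N:ℝ))+1) ^ m' * St9.Wt M τ α k) := by
            apply mul_le_mul_of_nonneg_left h3 (by positivity)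
        _ = ((m' + 1 : ℕ):ℝ)⁻¹ * (K ^ (m' + 1 - 1) * (((N:ℝ)+1)) ^ (m' + 1 - 1) * St9.Wt M τ α k) := by norm_num
        _ = ((m' + 1 : ℕ):ℝ)⁻¹ * (K ^ (m' + 1 - 1) * (((N:ℝ)+1)) ^ (m' + 1 - 1)) * St9.Wt M τ α k := by ring
    refine le_trans (Finset.sum_le_sum hterm) ?_
    rw [← Finset.sum_mul]
    have hWnn := St9.Wt_nonneg (α := α) hM0 hτ0 k
    have hE1C : E1 * St9.Wt M τ α k ≤ C ^ k * St9.Wt M τ α k := by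
      apply mul_le_mul_of_nonneg_right _ hWnn
      calc E1 ≤ C := le_max_right _ _
        _ ≤ C ^ k := le_self_pow₀ hC1 (by omega)
    refine le_trans hE1C ?_
    rw [St9.Wt, mul_pow]
    ring_nf
    exact le_refl _
  -- lower claim
  have hlower : ∀ M ∈ SL, D * M ∈ SX := by
    rintro M ⟨hM0, hM⟩
    refine ⟨by positivity, ?_⟩
    intro k hk1 hkN s t hs hst htT
    set τ : ℝ := t - s with hτdef
    have hτ0 : 0 ≤ τ := by simp [hτdef]; linarith
    set y : A := X s t - 1 with hydef
    set f : ℕ → ℝ := fun j => ν (St9.gproj 𝒜 j y) with hfdef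
    have hf0 : f 0 = 0 := by
      have : St9.gproj 𝒜 0 y = 0 := by
        rw [hydef, map_sub, St9.gproj_one_zero, St9.gproj_apply, hX0 s t hs hst htT, sub_self]
      simp [hfdef, this, hν0]
    have hfj : ∀ j, 1 ≤ j → f j = ν (St9.gproj 𝒜 j (X s t)) := by
      intro j hj
      rw [hfdef]
      simp only [hydef, map_sub, St9.gproj_one 𝒜 j hj, sub_zero]
    have hfnn : ∀ j, 0 ≤ f j := fun j => hν_nonneg _
    have hN1 : 1 ≤ N := le_trans hk1 hkN
    have key : ∀ k', 1 ≤ k' → k' ≤ N →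
        Q * ν (St9.gproj 𝒜 k' (X s t)) ≤ Q ^ (2 ^ k') * St9.Wt M τ α k' := by
      intro k'
      induction k' using Nat.strong_induction_on with
      | _ k' IH =>
        intro hk'1 hk'N
        have hfb : ∀ j, 1 ≤ j → j < k' → Q * f j ≤ Q ^ (2 ^ j) * St9.Wt M τ α j := by
          intro j hj hjk
          rw [hfj j hj]
          exact IH j hjk hj (by omega)
        have hGB := St9.GB_le (f := f) (k₀ := k') hK0 hQ1 hM0 hτ0 hα0 hf0 hfnn hfb
        have hIcc : Finset.Icc 1 N = insert 1 (Finset.Icc 2 N) := by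
          ext x; simp only [Finset.mem_Icc, Finset.mem_insert]; omega
        have hLproj : St9.gproj 𝒜 k' (truncLog N X s t)
            = St9.gproj 𝒜 k' y
              + ∑ m ∈ Finset.Icc 2 N, ((-1:ℝ) ^ (m + 1) * (m:ℝ)⁻¹) • St9.gproj 𝒜 k' (y ^ m) := by
          rw [truncLog, map_sum]
          have hc : ∀ m ∈ Finset.Icc 1 N,
              St9.gproj 𝒜 k' (((-1:ℝ) ^ (m + 1) * (m:ℝ)⁻¹) • (X s t - 1) ^ m)
                = ((-1:ℝ) ^ (m + 1) * (m:ℝ)⁻¹) • St9.gproj 𝒜 k' (y ^ m) := fun m _ => by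
            rw [← hydef, map_smul]
          rw [Finset.sum_congr rfl hc, hIcc, Finset.sum_insert (by simp)]
          norm_num
        have hXy : St9.gproj 𝒜 k' (X s t) = St9.gproj 𝒜 k' y := by
          rw [hydef, map_sub, St9.gproj_one 𝒜 k' hk'1, sub_zero]
        have hsplit : ν (St9.gproj 𝒜 k' y) ≤ ν (St9.gproj 𝒜 k' (truncLog N X s t))
            + ∑ m ∈ Finset.Icc 2 N, ((m:ℝ))⁻¹ * ν (St9.gproj 𝒜 k' (y ^ m)) := by
          have h1 : St9.gproj 𝒜 k' y = St9.gproj 𝒜 k' (truncLog N X s t)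
              + (- ∑ m ∈ Finset.Icc 2 N, ((-1:ℝ) ^ (m + 1) * (m:ℝ)⁻¹) • St9.gproj 𝒜 k' (y ^ m)) := by
            rw [hLproj]; abel
          rw [h1]
          refine le_trans (hν_add _ _) ?_
          rw [hνneg]
          refine add_le_add le_rfl ?_
          refine le_trans (St9.nu_sum_le hν_add hν0 _ _) ?_
          apply Finset.sum_le_sum
          intro m hm
          rw [hν_smul]
          have hm1 : 1 ≤ m := by rw [Finset.mem_Icc] at hm; omega
          have habs : |(-1:ℝ) ^ (m + 1) * (m:ℝ)⁻¹| = (m:ℝ)⁻¹ := by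
            rw [abs_mul, abs_pow, abs_neg, abs_one, one_pow, one_mul, abs_of_nonneg (by positivity)]
          rw [habs]
        -- term bounds for m ∈ Icc 2 N
        have hWnn := St9.Wt_nonneg (α := α) hM0 hτ0 k'
        have hterm : ∀ m ∈ Finset.Icc 2 N,
            Q * (((m:ℝ))⁻¹ * ν (St9.gproj 𝒜 k' (y ^ m)))
              ≤ ((m:ℝ))⁻¹ * (K ^ (m-1) * (((N:ℝ)+1)) ^ (m-1)) * (Q ^ (2 ^ k') / Q * St9.Wt M τ α k') := by
          intro m hm
          rw [Finset.mem_Icc] at hm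
          obtain ⟨m', rfl⟩ : ∃ m', m = m' + 1 := ⟨m - 1, by omega⟩
          have hm'1 : 1 ≤ m' := by omega
          have h1 : ν (St9.gproj 𝒜 k' (y ^ (m' + 1))) ≤ St9.GB K f m' k' :=
            St9.nu_gproj_pow_le 𝒜 hν_add hν0 hν_nonneg hK0 hKmul y m' k'
          have h2 := hGB m' k' le_rfl (fun h => by omega)
          have hGBnn : 0 ≤ St9.GB K f m' k' := St9.GB_nonneg hK0 hfnn m' k'
          have h3 : Q ^ 2 * ν (St9.gproj 𝒜 k' (y ^ (m' + 1)))
              ≤ K ^ m' * ((k':ℝ) + 1) ^ m' * Q ^ (2 ^ k') * St9.Wt M τ α k' := by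
            calc Q ^ 2 * ν (St9.gproj 𝒜 k' (y ^ (m' + 1))) ≤ Q ^ 2 * St9.GB K f m' k' := by
                  apply mul_le_mul_of_nonneg_left h1 (by positivity)
              _ ≤ Q ^ (m' + 1) * St9.GB K f m' k' := by
                  apply mul_le_mul_of_nonneg_right _ hGBnn
                  exact pow_le_pow_right₀ hQ1 (by omega)
              _ ≤ K ^ m' * ((k':ℝ) + 1) ^ m' * Q ^ (2 ^ k') * St9.Wt M τ α k' := h2
          have h4 : Q * ν (St9.gproj 𝒜 k' (y ^ (m' + 1)))
              ≤ K ^ m' * ((k':ℝ) + 1) ^ m' * (Q ^ (2 ^ k') / Q) * St9.Wt M τ α k' := by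
            rw [div_eq_mul_inv]
            have := mul_le_mul_of_nonneg_left h3 (le_of_lt (inv_pos.mpr hQ0))
            calc Q * ν (St9.gproj 𝒜 k' (y ^ (m' + 1)))
                = Q⁻¹ * (Q ^ 2 * ν (St9.gproj 𝒜 k' (y ^ (m' + 1)))) := by
                  field_simp
              _ ≤ Q⁻¹ * (K ^ m' * ((k':ℝ) + 1) ^ m' * Q ^ (2 ^ k') * St9.Wt M τ α k') := this
              _ = K ^ m' * ((k':ℝ) + 1) ^ m' * (Q ^ (2 ^ k') * Q⁻¹) * St9.Wt M τ α k' := by ring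
          have hk'N' : ((k':ℝ) + 1) ^ m' ≤ ((N:ℝ) + 1) ^ m' := by
            apply pow_le_pow_left₀ (by positivity)
            have : (k':ℝ) ≤ (N:ℝ) := by exact_mod_cast hk'N
            linarith
          have hQQ : 0 ≤ Q ^ (2 ^ k') / Q := by positivity
          calc Q * (((m' + 1 : ℕ):ℝ)⁻¹ * ν (St9.gproj 𝒜 k' (y ^ (m' + 1))))
              = ((m' + 1 : ℕ):ℝ)⁻¹ * (Q * ν (St9.gproj 𝒜 k' (y ^ (m' + 1)))) := by ring
            _ ≤ ((m' + 1 : ℕ):ℝ)⁻¹ * (K ^ m' * ((k':ℝ) + 1) ^ m' * (Q ^ (2 ^ k') / Q) * St9.Wt M τ α k') := by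
                apply mul_le_mul_of_nonneg_left h4 (by positivity)
            _ ≤ ((m' + 1 : ℕ):ℝ)⁻¹ * (K ^ m' * ((N:ℝ) + 1) ^ m' * (Q ^ (2 ^ k') / Q) * St9.Wt M τ α k') := by
                have h5 : K ^ m' * ((k':ℝ) + 1) ^ m' * (Q ^ (2 ^ k') / Q) * St9.Wt M τ α k'
                    ≤ K ^ m' * ((N:ℝ) + 1) ^ m' * (Q ^ (2 ^ k') / Q) * St9.Wt M τ α k' := by
                  gcongr <;> positivity
                apply mul_le_mul_of_nonneg_left h5 (by positivity)
            _ = ((m' + 1 : ℕ):ℝ)⁻¹ * (K ^ (m' + 1 - 1) * (((N:ℝ)+1)) ^ (m' + 1 - 1)) * (Q ^ (2 ^ k') / Q * St9.Wt M τ α k') := by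
                norm_num; ring
        -- the log term
        have hQ2k : Q ^ 2 ≤ Q ^ (2 ^ k') := by
          apply pow_le_pow_right₀ hQ1
          calc 2 = 2 ^ 1 := by norm_num
            _ ≤ 2 ^ k' := Nat.pow_le_pow_right (by norm_num) hk'1
        have hLbound : Q * ν (St9.gproj 𝒜 k' (truncLog N X s t)) ≤ Q ^ (2 ^ k') / Q * St9.Wt M τ α k' := by
          have h1 : ν (St9.gproj 𝒜 k' (truncLog N X s t)) ≤ St9.Wt M τ α k' := by
            rw [St9.gproj_apply, St9.Wt]
            exact hM k' hk'1 hk'N s t hs hst htT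
          rw [div_mul_eq_mul_div, le_div_iff₀ hQ0]
          calc Q * ν (St9.gproj 𝒜 k' (truncLog N X s t)) * Q
              = Q ^ 2 * ν (St9.gproj 𝒜 k' (truncLog N X s t)) := by ring
            _ ≤ Q ^ (2 ^ k') * St9.Wt M τ α k' := by
                apply mul_le_mul hQ2k h1 (hν_nonneg _) (by positivity)
        -- put it together
        rw [hXy]
        calc Q * ν (St9.gproj 𝒜 k' y)
            ≤ Q * (ν (St9.gproj 𝒜 k' (truncLog N X s t))
                + ∑ m ∈ Finset.Icc 2 N, ((m:ℝ))⁻¹ * ν (St9.gproj 𝒜 k' (y ^ m))) := by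
              apply mul_le_mul_of_nonneg_left hsplit (le_of_lt hQ0)
          _ = Q * ν (St9.gproj 𝒜 k' (truncLog N X s t))
                + ∑ m ∈ Finset.Icc 2 N, Q * (((m:ℝ))⁻¹ * ν (St9.gproj 𝒜 k' (y ^ m))) := by
              rw [mul_add, Finset.mul_sum]
          _ ≤ Q ^ (2 ^ k') / Q * St9.Wt M τ α k'
                + ∑ m ∈ Finset.Icc 2 N, ((m:ℝ))⁻¹ * (K ^ (m-1) * (((N:ℝ)+1)) ^ (m-1)) * (Q ^ (2 ^ k') / Q * St9.Wt M τ α k') := by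
              exact add_le_add hLbound (Finset.sum_le_sum hterm)
          _ = (1 + E2) * (Q ^ (2 ^ k') / Q * St9.Wt M τ α k') := by
              rw [← Finset.sum_mul, hE2def]; ring
          _ = Q ^ (2 ^ k') * St9.Wt M τ α k' := by
              rw [← hQdef]; field_simp
    -- conclude from `key` at k
    have hkey := key k hk1 hkN
    rw [← St9.gproj_apply]
    have hpow : Q ^ (2 ^ k) ≤ Q * D ^ k := by
      rw [hDdef, ← pow_mul, ← pow_succ']
      apply pow_le_pow_right₀ hQ1
      have h1 : 2 ^ k ≤ 2 ^ N := Nat.pow_le_pow_right (by norm_num) hkN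
      have h2 : 2 ^ N ≤ 2 ^ N * k := Nat.le_mul_of_pos_right _ (by omega)
      omega
    have hWnn := St9.Wt_nonneg (α := α) hM0 hτ0 k
    have h6 : Q * ν (St9.gproj 𝒜 k (X s t)) ≤ Q * (D ^ k * St9.Wt M τ α k) := by
      refine le_trans hkey ?_
      calc Q ^ (2 ^ k) * St9.Wt M τ α k ≤ (Q * D ^ k) * St9.Wt M τ α k := by
            apply mul_le_mul_of_nonneg_right hpow hWnn
        _ = Q * (D ^ k * St9.Wt M τ α k) := by ring
    have h7 : ν (St9.gproj 𝒜 k (X s t)) ≤ D ^ k * St9.Wt M τ α k :=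
      le_of_mul_le_mul_left h6 hQ0
    calc ν (St9.gproj 𝒜 k (X s t)) ≤ D ^ k * St9.Wt M τ α k := h7
      _ = (D * M) ^ k * τ ^ ((k:ℝ) * α) := by rw [St9.Wt, mul_pow]; ring

  -- conclude
  have hSXbdd : BddBelow SX := ⟨0, fun M hM => hM.1⟩
  have hSLbdd : BddBelow SL := ⟨0, fun M hM => hM.1⟩
  obtain ⟨M₀, hM₀⟩ := hne
  have hSLne : SL.Nonempty := ⟨C * M₀, hupper M₀ hM₀⟩
  constructor
  · refine le_csInf hSLne ?_
    intro M hMmem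
    have h1 : sInf SX ≤ D * M := csInf_le hSXbdd (hlower M hMmem)
    have hMnn : 0 ≤ M := hMmem.1
    rw [inv_mul_le_iff₀ hD0]
    exact h1
  · have h : C⁻¹ * sInf SL ≤ sInf SX := by
      refine le_csInf ⟨M₀, hM₀⟩ ?_
      intro M hMmem
      have h1 : sInf SL ≤ C * M := csInf_le hSLbdd (hupper M hMmem)
      rw [inv_mul_le_iff₀ hC0]
      exact h1
    have hC' : sInf SL = C * (C⁻¹ * sInf SL) := by field_simp
    rw [hC']
    exact mul_le_mul_of_nonneg_left h (le_of_lt hC0)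


end
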